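/- Let r : ℝ → ℝ be bounded and measurable and let α ≥ 0. Suppose (μ̃, σ̃) ∈ ℝ × (0, ∞) is a stationary point of the Gaussian objective J^b_α. Then for every N ≥ 1 and every η ∈ ℝ^N, the mixture parameter θ̃ with μ_k = μ̃ and σ_k = σ̃ for all k = 1, …, N and softmax-weight parameters η is a stationary point of the N-component mixture objective J^m_α (all 3N partial derivatives of J^m_α exist and vanish at θ̃), and moreover J^m_α(θ̃) = J^b_α(μ̃, σ̃). -/

import Mathlib

open MeasureTheory Real

/-- Gaussian density `φ(a; μ, σ) = (2πσ²)^(−1/2) · exp(−(a−μ)²/(2σ²))`. -/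
noncomputable def gpdf (μ σ a : ℝ) : ℝ :=
  (Real.sqrt (2 * Real.pi * σ ^ 2))⁻¹ * Real.exp (-((a - μ) ^ 2) / (2 * σ ^ 2))

/-- Entropy-regularized bandit objective under the Gaussian parameterization:
`J^b_α(μ, σ) = ∫ (r(a) − α·log φ(a; μ, σ)) · φ(a; μ, σ) da`. -/
noncomputable def Jb (r : ℝ → ℝ) (α μ σ : ℝ) : ℝ :=
  ∫ a, (r a - α * Real.log (gpdf μ σ a)) * gpdf μ σ a

/-- Softmax weights `w_k = exp(η_k) / Σ_j exp(η_j)`. -/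
noncomputable def softmaxW {N : ℕ} (η : Fin N → ℝ) (k : Fin N) : ℝ :=
  Real.exp (η k) / ∑ j, Real.exp (η j)

/-- Mixture density with softmax weights:
`m(a) = Σ_k w_k · φ(a; μ_k, σ_k)`. -/
noncomputable def mixDensity {N : ℕ} (μs σs η : Fin N → ℝ) (a : ℝ) : ℝ :=
  ∑ k, softmaxW η k * gpdf (μs k) (σs k) a

/-- Entropy-regularized bandit objective under the `N`-component mixture
parameterization. -/
noncomputable def Jm (r : ℝ → ℝ) (α : ℝ) {N : ℕ} (μs σs η : Fin N → ℝ) : ℝ :=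
  ∫ a, (r a - α * Real.log (mixDensity μs σs η a)) * mixDensity μs σs η a

/-- `(μ, σ)` (with `σ > 0`) is a stationary point of `J^b_α`: both partial
derivatives exist and vanish. -/
def IsStatB (r : ℝ → ℝ) (α μ σ : ℝ) : Prop :=
  0 < σ ∧
  (DifferentiableAt ℝ (fun x => Jb r α x σ) μ ∧ deriv (fun x => Jb r α x σ) μ = 0) ∧
  (DifferentiableAt ℝ (fun x => Jb r α μ x) σ ∧ deriv (fun x => Jb r α μ x) σ = 0)

/-- `(μs, σs, η)` (with all `σs k > 0`) is a stationary point of `J^m_α`: all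
`3N` partial derivatives exist and vanish. -/
def IsStatM (r : ℝ → ℝ) (α : ℝ) {N : ℕ} (μs σs η : Fin N → ℝ) : Prop :=
  (∀ k, 0 < σs k) ∧
  ∀ k : Fin N,
    (DifferentiableAt ℝ (fun x => Jm r α (Function.update μs k x) σs η) (μs k) ∧
      deriv (fun x => Jm r α (Function.update μs k x) σs η) (μs k) = 0) ∧
    (DifferentiableAt ℝ (fun x => Jm r α μs (Function.update σs k x) η) (σs k) ∧
      deriv (fun x => Jm r α μs (Function.update σs k x) η) (σs k) = 0) ∧
    (DifferentiableAt ℝ (fun x => Jm r α μs σs (Function.update η k x)) (η k) ∧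
      deriv (fun x => Jm r α μs σs (Function.update η k x)) (η k) = 0)

lemma sqrt2pi_pos {σ : ℝ} (hσ : 0 < σ) : 0 < Real.sqrt (2 * π * σ ^ 2) :=
  Real.sqrt_pos.2 (by positivity)

lemma gpdf_pos {σ : ℝ} (hσ : 0 < σ) (μ a : ℝ) : 0 < gpdf μ σ a :=
  mul_pos (inv_pos.2 (sqrt2pi_pos hσ)) (exp_pos _)

lemma gpdf_le {σ : ℝ} (hσ : 0 < σ) (μ a : ℝ) :
    gpdf μ σ a ≤ (Real.sqrt (2 * π * σ ^ 2))⁻¹ := by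
  have h1 : Real.exp (-((a - μ) ^ 2) / (2 * σ ^ 2)) ≤ 1 := by
    rw [Real.exp_le_one_iff]
    have : (0:ℝ) ≤ (a - μ) ^ 2 / (2 * σ ^ 2) := by positivity
    linarith [neg_div ((2:ℝ) * σ ^ 2) ((a - μ) ^ 2)]
  have h2 : (0:ℝ) ≤ (Real.sqrt (2 * π * σ ^ 2))⁻¹ := inv_nonneg.2 (Real.sqrt_nonneg _)
  calc gpdf μ σ a ≤ (Real.sqrt (2 * π * σ ^ 2))⁻¹ * 1 := by
        unfold gpdf; exact mul_le_mul_of_nonneg_left h1 h2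
    _ = _ := mul_one _

lemma continuous_gpdf (μ σ : ℝ) : Continuous (gpdf μ σ) := by
  unfold gpdf; fun_prop

lemma hasDerivAt_gpdf_mu {σ : ℝ} (hσ : 0 < σ) (a x : ℝ) :
    HasDerivAt (fun m => gpdf m σ a) (gpdf x σ a * ((a - x) / σ ^ 2)) x := by
  have h0 : HasDerivAt (fun m : ℝ => a - m) (-1) x := by
    simpa using (hasDerivAt_id x).const_sub a
  have h1 : HasDerivAt (fun m : ℝ => -((a - m) ^ 2) / (2 * σ ^ 2)) ((a - x) / σ ^ 2) x := by
    have h2 := ((h0.pow 2).neg).div_const (2 * σ ^ 2)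
    refine h2.congr_deriv ?_
    field_simp
    ring
  have h3 := (h1.exp).const_mul ((Real.sqrt (2 * π * σ ^ 2))⁻¹)
  refine h3.congr_deriv ?_
  unfold gpdf
  ring

lemma hasDerivAt_obj {R αv : ℝ} {p : ℝ → ℝ} {p' x : ℝ} (hp : HasDerivAt p p' x)
    (hpos : 0 < p x) :
    HasDerivAt (fun y => (R - αv * Real.log (p y)) * p y)
      ((R - αv * Real.log (p x) - αv) * p') x := by
  have hlog : HasDerivAt (fun y => Real.log (p y)) (p' / p x) x := hp.log hpos.ne'
  have h := ((hasDerivAt_const x R).sub (hlog.const_mul αv)).mul hp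
  refine h.congr_deriv ?_
  simp only [Pi.sub_apply]
  field_simp
  ring

lemma integrable_master (M b c : ℝ) (hb : 0 < b) :
    Integrable (fun a : ℝ => M * ((1 + (a - c) ^ 2) ^ 2 * Real.exp (-(b * (a - c) ^ 2)))) := by
  have key : ∀ u : ℝ, (1 + u ^ 2) ^ 2 * Real.exp (-(b * u ^ 2))
      ≤ (1 + 3 / b) ^ 2 * Real.exp (-(b / 3 * u ^ 2)) := by
    intro u
    have h1 : 1 + u ^ 2 ≤ (1 + 3 / b) * Real.exp (b / 3 * u ^ 2) := by
      have he : 1 + b / 3 * u ^ 2 ≤ Real.exp (b / 3 * u ^ 2) := by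
        have := Real.add_one_le_exp (b / 3 * u ^ 2); linarith
      have hstep : 1 + u ^ 2 ≤ (1 + 3 / b) * (1 + b / 3 * u ^ 2) := by
        have h2 : (0:ℝ) ≤ u ^ 2 := sq_nonneg u
        have hexp : (1 + 3 / b) * (1 + b / 3 * u ^ 2) = 1 + b/3*u^2 + 3/b + u^2 := by
          field_simp; ring
        nlinarith [mul_nonneg (le_of_lt (by positivity : (0:ℝ) < b/3)) h2,
          (by positivity : (0:ℝ) ≤ 3 / b)]
      exact hstep.trans (mul_le_mul_of_nonneg_left he (by positivity))
    have h2 : (1 + u ^ 2) ^ 2 ≤ ((1 + 3 / b) * Real.exp (b / 3 * u ^ 2)) ^ 2 :=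
      pow_le_pow_left₀ (by positivity) h1 2
    calc (1 + u ^ 2) ^ 2 * Real.exp (-(b * u ^ 2))
        ≤ ((1 + 3 / b) * Real.exp (b / 3 * u ^ 2)) ^ 2 * Real.exp (-(b * u ^ 2)) :=
          mul_le_mul_of_nonneg_right h2 (Real.exp_pos _).le
      _ = (1 + 3 / b) ^ 2 * Real.exp (-(b / 3 * u ^ 2)) := by
          rw [mul_pow, ← Real.exp_nat_mul, mul_assoc, ← Real.exp_add]
          congr 1
          ring
  have h1 : Integrable (fun u : ℝ => (1 + u ^ 2) ^ 2 * Real.exp (-(b * u ^ 2))) := by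
    refine ((integrable_exp_neg_mul_sq (by positivity : (0:ℝ) < b/3)).const_mul
      ((1 + 3 / b) ^ 2)).mono' ?_ ?_
    · exact Continuous.aestronglyMeasurable (by fun_prop)
    · refine Filter.Eventually.of_forall fun u => ?_
      rw [Real.norm_eq_abs, abs_of_nonneg (by positivity)]
      simpa [neg_mul] using key u
  exact (h1.comp_sub_right c).const_mul M

set_option maxHeartbeats 1000000 in
lemma keyMu (r : ℝ → ℝ) (hmeas : Measurable r) (C : ℝ) (hbd : ∀ a, |r a| ≤ C)
    (α : ℝ) (hα : 0 ≤ α) (μt σt : ℝ) (hσ : 0 < σt) (w : ℝ) (hw0 : 0 < w) (hw1 : w ≤ 1) :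
    HasDerivAt (fun x => ∫ a, (r a - α * Real.log (w * gpdf x σt a + (1 - w) * gpdf μt σt a)) *
        (w * gpdf x σt a + (1 - w) * gpdf μt σt a))
      (w * ∫ a, (r a - α * Real.log (gpdf μt σt a) - α) * (gpdf μt σt a * ((a - μt) / σt ^ 2)))
      μt := by
  have hC : (0:ℝ) ≤ C := (abs_nonneg _).trans (hbd 0)
  obtain ⟨c0, hc0def⟩ : ∃ c : ℝ, c = (Real.sqrt (2 * π * σt ^ 2))⁻¹ := ⟨_, rfl⟩
  have hc0 : 0 < c0 := hc0def ▸ inv_pos.2 (sqrt2pi_pos hσ)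
  obtain ⟨iv, hivdef⟩ : ∃ c : ℝ, c = (σt ^ 2)⁻¹ := ⟨_, rfl⟩
  have hiv : 0 < iv := hivdef ▸ by positivity
  obtain ⟨L, hLdef⟩ : ∃ c : ℝ, c = |Real.log c0| := ⟨_, rfl⟩
  have hL : 0 ≤ L := hLdef ▸ abs_nonneg _
  obtain ⟨K, hKdef⟩ : ∃ c : ℝ, c = C + α * L + α * iv + α := ⟨_, rfl⟩
  have hK : 0 ≤ K := hKdef ▸ by positivity
  obtain ⟨E, hEdef⟩ : ∃ c : ℝ, c = Real.exp (1 / (2 * σt ^ 2)) := ⟨_, rfl⟩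
  have hE : 0 < E := hEdef ▸ Real.exp_pos _
  obtain ⟨M, hMdef⟩ : ∃ c : ℝ, c = K * (c0 * E * (2 * iv)) := ⟨_, rfl⟩
  obtain ⟨p, hpdef⟩ : ∃ p : ℝ → ℝ → ℝ,
      p = fun x a => w * gpdf x σt a + (1 - w) * gpdf μt σt a := ⟨_, rfl⟩
  obtain ⟨F', hF'def⟩ : ∃ F' : ℝ → ℝ → ℝ,
      F' = fun x a => (r a - α * Real.log (p x a) - α) *
        (w * (gpdf x σt a * ((a - x) / σt ^ 2))) := ⟨_, rfl⟩
  -- basic facts about p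
  have hpval : ∀ x a, p x a = w * gpdf x σt a + (1 - w) * gpdf μt σt a := by
    intro x a; rw [hpdef]
  have hF'val : ∀ x a, F' x a = (r a - α * Real.log (p x a) - α) *
      (w * (gpdf x σt a * ((a - x) / σt ^ 2))) := by
    intro x a; rw [hF'def]
  have hppos : ∀ x a, 0 < p x a := fun x a => by
    have h1 : 0 < w * gpdf x σt a := mul_pos hw0 (gpdf_pos hσ _ _)
    have h2 : 0 ≤ (1 - w) * gpdf μt σt a :=
      mul_nonneg (by linarith) (gpdf_pos hσ _ _).le
    rw [hpval]; linarith
  have hpm : ∀ x, Measurable (p x) := fun x => by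
    rw [hpdef]
    exact ((continuous_gpdf x σt).measurable.const_mul w).add
      ((continuous_gpdf μt σt).measurable.const_mul (1 - w))
  have hpid : ∀ a, p μt a = gpdf μt σt a := fun a => by rw [hpval]; ring
  -- upper bound for p
  have hple : ∀ x a, p x a ≤ c0 := by
    intro x a
    have h1 := gpdf_le hσ x a
    have h2 := gpdf_le hσ μt a
    rw [← hc0def] at h1 h2
    have h3 : 0 < gpdf x σt a := gpdf_pos hσ _ _
    have h4 : 0 < gpdf μt σt a := gpdf_pos hσ _ _
    rw [hpval]
    nlinarith [mul_le_mul_of_nonneg_left h1 hw0.le,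
      mul_le_mul_of_nonneg_left h2 (by linarith : (0:ℝ) ≤ 1 - w)]
  -- lower bound for p on the ball
  have hplow : ∀ a, ∀ x ∈ Metric.ball μt 1,
      c0 * Real.exp (-(((a - μt) ^ 2 + 1) * iv)) ≤ p x a := by
    intro a x hx
    rw [Metric.mem_ball, Real.dist_eq] at hx
    obtain ⟨hd1, hd2⟩ := abs_le.1 hx.le
    have hdsq : (x - μt) ^ 2 ≤ 1 := by nlinarith
    have hg1 : c0 * Real.exp (-(((a - μt) ^ 2 + 1) * iv)) ≤ gpdf x σt a := by
      unfold gpdf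
      rw [← hc0def]
      apply mul_le_mul_of_nonneg_left _ hc0.le
      apply Real.exp_le_exp.2
      have hsq : (a - x) ^ 2 ≤ 2 * (a - μt) ^ 2 + 2 := by
        nlinarith [sq_nonneg ((a - μt) + (x - μt))]
      have hexpand : -(((a - μt) ^ 2 + 1) * iv) - (-((a - x) ^ 2) / (2 * σt ^ 2))
          = ((a - x) ^ 2 - (2 * (a - μt) ^ 2 + 2)) / (2 * σt ^ 2) := by
        rw [hivdef]; field_simp; ring
      have hle : -(((a - μt) ^ 2 + 1) * iv) - (-((a - x) ^ 2) / (2 * σt ^ 2)) ≤ 0 := by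
        rw [hexpand]
        apply div_nonpos_of_nonpos_of_nonneg (by linarith) (by positivity)
      linarith
    have hg2 : c0 * Real.exp (-(((a - μt) ^ 2 + 1) * iv)) ≤ gpdf μt σt a := by
      unfold gpdf
      rw [← hc0def]
      apply mul_le_mul_of_nonneg_left _ hc0.le
      apply Real.exp_le_exp.2
      have hexpand : -(((a - μt) ^ 2 + 1) * iv) - (-((a - μt) ^ 2) / (2 * σt ^ 2))
          = (-(a - μt) ^ 2 - 2) / (2 * σt ^ 2) := by
        rw [hivdef]; field_simp; ring
      have hle : -(((a - μt) ^ 2 + 1) * iv) - (-((a - μt) ^ 2) / (2 * σt ^ 2)) ≤ 0 := by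
        rw [hexpand]
        apply div_nonpos_of_nonpos_of_nonneg (by nlinarith [sq_nonneg (a - μt)]) (by positivity)
      linarith
    rw [hpval]
    nlinarith [mul_le_mul_of_nonneg_left hg1 hw0.le,
      mul_le_mul_of_nonneg_left hg2 (by linarith : (0:ℝ) ≤ 1 - w)]
  -- |log p| bound on the ball
  have hlogp : ∀ a, ∀ x ∈ Metric.ball μt 1,
      |Real.log (p x a)| ≤ L + ((a - μt) ^ 2 + 1) * iv := by
    intro a x hx
    have h1 : Real.log (p x a) ≤ Real.log c0 :=
      Real.log_le_log (hppos x a) (hple x a)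
    have h2 : Real.log c0 + -(((a - μt) ^ 2 + 1) * iv) ≤ Real.log (p x a) := by
      have h3 := Real.log_le_log
        (by positivity : 0 < c0 * Real.exp (-(((a - μt) ^ 2 + 1) * iv))) (hplow a x hx)
      rwa [Real.log_mul hc0.ne' (Real.exp_ne_zero _), Real.log_exp] at h3
    have h3 : 0 ≤ ((a - μt) ^ 2 + 1) * iv := by positivity
    have h4 : Real.log c0 ≤ L := hLdef ▸ le_abs_self _
    have h5 : -L ≤ Real.log c0 := hLdef ▸ neg_abs_le _
    rw [abs_le]
    constructor <;> linarith
  -- pointwise derivative on the ball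
  have hdiff : ∀ a, ∀ x ∈ Metric.ball μt 1,
      HasDerivAt (fun y => (r a - α * Real.log (p y a)) * p y a) (F' x a) x := by
    intro a x _
    have hp : HasDerivAt (fun y => p y a) (w * (gpdf x σt a * ((a - x) / σt ^ 2))) x := by
      rw [hpdef]
      exact ((hasDerivAt_gpdf_mu hσ a x).const_mul w).add_const ((1 - w) * gpdf μt σt a)
    rw [hF'val]
    exact hasDerivAt_obj hp (hppos x a)
  -- bound for F' on the ball
  have hbound : ∀ a, ∀ x ∈ Metric.ball μt 1,
      ‖F' x a‖ ≤ M * ((1 + (a - μt) ^ 2) ^ 2 * Real.exp (-(iv / 4 * (a - μt) ^ 2))) := by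
    intro a x hx
    have hxd : |x - μt| < 1 := by rw [Metric.mem_ball, Real.dist_eq] at hx; exact hx
    obtain ⟨hd1, hd2⟩ := abs_le.1 hxd.le
    have hdsq : (x - μt) ^ 2 ≤ 1 := by nlinarith
    have hfpos : 0 < gpdf x σt a := gpdf_pos hσ _ _
    have hfle : gpdf x σt a ≤ c0 * E * Real.exp (-(iv / 4 * (a - μt) ^ 2)) := by
      unfold gpdf
      rw [← hc0def, hEdef, mul_assoc, ← Real.exp_add]
      apply mul_le_mul_of_nonneg_left _ hc0.le
      apply Real.exp_le_exp.2
      have hsq : (a - μt) ^ 2 ≤ 2 * (a - x) ^ 2 + 2 := by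
        nlinarith [sq_nonneg ((a - μt) - 2 * (x - μt))]
      have hexpand : (1 / (2 * σt ^ 2) + -(iv / 4 * (a - μt) ^ 2)) - (-((a - x) ^ 2) / (2 * σt ^ 2))
          = (2 + 2 * (a - x) ^ 2 - (a - μt) ^ 2) / (4 * σt ^ 2) := by
        rw [hivdef]; field_simp; ring
      have hle : 0 ≤ (1 / (2 * σt ^ 2) + -(iv / 4 * (a - μt) ^ 2))
          - (-((a - x) ^ 2) / (2 * σt ^ 2)) := by
        rw [hexpand]
        apply div_nonneg (by linarith) (by positivity)
      linarith
    have hA : |r a - α * Real.log (p x a) - α| ≤ K * (1 + (a - μt) ^ 2) := by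
      have h1 : |r a - α * Real.log (p x a) - α| ≤ C + α * |Real.log (p x a)| + α := by
        have h2 := abs_sub (r a - α * Real.log (p x a)) α
        have h3 := abs_sub (r a) (α * Real.log (p x a))
        have h4 : |α * Real.log (p x a)| = α * |Real.log (p x a)| := by
          rw [abs_mul, abs_of_nonneg hα]
        have h5 := hbd a
        have h6 : |(α:ℝ)| = α := abs_of_nonneg hα
        rw [h6] at h2
        rw [h4] at h3
        linarith
      have h8 : α * |Real.log (p x a)| ≤ α * (L + ((a - μt) ^ 2 + 1) * iv) :=
        mul_le_mul_of_nonneg_left (hlogp a x hx) hα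
      rw [hKdef]
      nlinarith [mul_nonneg (mul_nonneg hα hiv.le) (sq_nonneg (a - μt)),
        mul_nonneg hC (sq_nonneg (a - μt)),
        mul_nonneg (mul_nonneg hα hL) (sq_nonneg (a - μt)),
        mul_nonneg hα (sq_nonneg (a - μt))]
    have hB : w * (gpdf x σt a * |(a - x) / σt ^ 2|)
        ≤ (c0 * E * (2 * iv)) * ((1 + (a - μt) ^ 2) * Real.exp (-(iv / 4 * (a - μt) ^ 2))) := by
      have hd : |(a - x) / σt ^ 2| ≤ (|a - μt| + 1) * iv := by
        rw [abs_div, abs_of_nonneg (by positivity : (0:ℝ) ≤ σt ^ 2), div_eq_mul_inv, ← hivdef]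
        apply mul_le_mul_of_nonneg_right _ hiv.le
        calc |a - x| = |(a - μt) - (x - μt)| := by ring_nf
          _ ≤ |a - μt| + |x - μt| := abs_sub _ _
          _ ≤ |a - μt| + 1 := by linarith
      have habs : |a - μt| + 1 ≤ 2 * (1 + (a - μt) ^ 2) := by
        nlinarith [sq_nonneg (|a - μt| - 1), sq_abs (a - μt), abs_nonneg (a - μt)]
      calc w * (gpdf x σt a * |(a - x) / σt ^ 2|)
          ≤ 1 * ((c0 * E * Real.exp (-(iv / 4 * (a - μt) ^ 2))) * ((|a - μt| + 1) * iv)) := by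
            apply mul_le_mul hw1 _ (by positivity) zero_le_one
            exact mul_le_mul hfle hd (abs_nonneg _) (by positivity)
        _ = (c0 * E) * ((|a - μt| + 1) * iv) * Real.exp (-(iv / 4 * (a - μt) ^ 2)) := by ring
        _ ≤ (c0 * E) * (2 * (1 + (a - μt) ^ 2) * iv) * Real.exp (-(iv / 4 * (a - μt) ^ 2)) := by
            apply mul_le_mul_of_nonneg_right _ (Real.exp_pos _).le
            apply mul_le_mul_of_nonneg_left _ (by positivity)
            exact mul_le_mul_of_nonneg_right habs hiv.le
        _ = (c0 * E * (2 * iv)) * ((1 + (a - μt) ^ 2) * Real.exp (-(iv / 4 * (a - μt) ^ 2))) := by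
            ring
    have hFeq : ‖F' x a‖ = |r a - α * Real.log (p x a) - α|
        * (w * (gpdf x σt a * |(a - x) / σt ^ 2|)) := by
      rw [hF'val, Real.norm_eq_abs, abs_mul, abs_mul, abs_mul, abs_of_pos hw0, abs_of_pos hfpos]
    rw [hFeq, hMdef]
    calc |r a - α * Real.log (p x a) - α| * (w * (gpdf x σt a * |(a - x) / σt ^ 2|))
        ≤ (K * (1 + (a - μt) ^ 2)) *
          ((c0 * E * (2 * iv)) * ((1 + (a - μt) ^ 2) * Real.exp (-(iv / 4 * (a - μt) ^ 2)))) := by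
          apply mul_le_mul hA hB _ (by positivity)
          positivity
      _ = (K * (c0 * E * (2 * iv))) *
          ((1 + (a - μt) ^ 2) ^ 2 * Real.exp (-(iv / 4 * (a - μt) ^ 2))) := by ring
  -- measurability
  have hFmeas : ∀ x : ℝ,
      AEStronglyMeasurable (fun a => (r a - α * Real.log (p x a)) * p x a) volume :=
    fun x => ((hmeas.sub (((hpm x).log).const_mul α)).mul (hpm x)).aestronglyMeasurable
  have hF'meas : AEStronglyMeasurable (F' μt) volume := by
    rw [hF'def]
    apply Measurable.aestronglyMeasurable
    apply Measurable.mul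
    · exact (hmeas.sub (((hpm μt).log).const_mul α)).sub measurable_const
    · apply Measurable.const_mul
      exact (continuous_gpdf μt σt).measurable.mul (by fun_prop)
  -- integrability of F μt
  have hFint : Integrable (fun a => (r a - α * Real.log (p μt a)) * p μt a) := by
    apply (integrable_master (K * c0) (iv / 2) μt (by positivity)).mono' (hFmeas μt)
    refine Filter.Eventually.of_forall fun a => ?_
    have hgl : gpdf μt σt a = c0 * Real.exp (-(iv / 2 * (a - μt) ^ 2)) := by
      unfold gpdf
      rw [← hc0def]
      congr 1
      rw [hivdef]
      field_simp
    have hlg : |Real.log (gpdf μt σt a)| ≤ L + iv / 2 * (a - μt) ^ 2 := by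
      rw [hgl, Real.log_mul hc0.ne' (Real.exp_ne_zero _), Real.log_exp]
      calc |Real.log c0 + -(iv / 2 * (a - μt) ^ 2)|
          ≤ |Real.log c0| + |(-(iv / 2 * (a - μt) ^ 2))| := abs_add_le _ _
        _ = L + iv / 2 * (a - μt) ^ 2 := by
            rw [← hLdef, abs_neg, abs_of_nonneg (by positivity)]
    have hgpos : 0 < gpdf μt σt a := gpdf_pos hσ _ _
    rw [Real.norm_eq_abs, abs_mul, hpid a, abs_of_pos hgpos]
    have hA : |r a - α * Real.log (gpdf μt σt a)| ≤ K * (1 + (a - μt) ^ 2) := by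
      have h3 := abs_sub (r a) (α * Real.log (gpdf μt σt a))
      have h4 : |α * Real.log (gpdf μt σt a)| = α * |Real.log (gpdf μt σt a)| := by
        rw [abs_mul, abs_of_nonneg hα]
      have h5 := hbd a
      have h8 : α * |Real.log (gpdf μt σt a)| ≤ α * (L + iv / 2 * (a - μt) ^ 2) :=
        mul_le_mul_of_nonneg_left hlg hα
      rw [h4] at h3
      rw [hKdef]
      nlinarith [mul_nonneg (mul_nonneg hα hiv.le) (sq_nonneg (a - μt)),
        mul_nonneg hC (sq_nonneg (a - μt)),
        mul_nonneg (mul_nonneg hα hL) (sq_nonneg (a - μt)),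
        mul_nonneg hα (sq_nonneg (a - μt))]
    have hgle : gpdf μt σt a ≤ c0 * Real.exp (-(iv / 2 * (a - μt) ^ 2)) := le_of_eq hgl
    calc |r a - α * Real.log (gpdf μt σt a)| * gpdf μt σt a
        ≤ (K * (1 + (a - μt) ^ 2)) * (c0 * Real.exp (-(iv / 2 * (a - μt) ^ 2))) :=
          mul_le_mul hA hgle hgpos.le (by positivity)
      _ ≤ (K * c0) * ((1 + (a - μt) ^ 2) ^ 2 * Real.exp (-(iv / 2 * (a - μt) ^ 2))) := by
          have h9 : (1 + (a - μt) ^ 2) ≤ (1 + (a - μt) ^ 2) ^ 2 := by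
            nlinarith [sq_nonneg (a - μt), sq_nonneg ((a - μt) ^ 2)]
          have h10 : 0 ≤ K * c0 * Real.exp (-(iv / 2 * (a - μt) ^ 2)) := by positivity
          nlinarith [mul_le_mul_of_nonneg_right h9 h10]
  -- apply the dominated derivative theorem
  have main := hasDerivAt_integral_of_dominated_loc_of_deriv_le (𝕜 := ℝ) (μ := volume)
    (F := fun x a => (r a - α * Real.log (p x a)) * p x a) (F' := F')
    (x₀ := μt)
    (bound := fun a => M * ((1 + (a - μt) ^ 2) ^ 2 * Real.exp (-(iv / 4 * (a - μt) ^ 2))))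
    (Metric.ball_mem_nhds μt one_pos) (Filter.Eventually.of_forall hFmeas) hFint hF'meas
    (Filter.Eventually.of_forall fun a x hx => hbound a x hx)
    (integrable_master M (iv / 4) μt (by positivity))
    (Filter.Eventually.of_forall fun a x hx => hdiff a x hx)
  obtain ⟨-, hder⟩ := main
  have hval : (∫ a, F' μt a) =
      w * ∫ a, (r a - α * Real.log (gpdf μt σt a) - α) * (gpdf μt σt a * ((a - μt) / σt ^ 2)) := by
    rw [← integral_const_mul]
    apply integral_congr_ae
    refine Filter.EventuallyEq.of_eq (funext fun a => ?_)
    rw [hF'val, hpid a]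
    ring
  rw [hval] at hder
  have hfun : (fun x => ∫ a, (r a - α * Real.log (p x a)) * p x a)
      = fun x => ∫ a, (r a - α * Real.log (w * gpdf x σt a + (1 - w) * gpdf μt σt a)) *
          (w * gpdf x σt a + (1 - w) * gpdf μt σt a) := by
    rw [hpdef]
  rw [hfun] at hder
  exact hder

lemma gpdf_eq {σ : ℝ} (hσ : 0 < σ) (μ a : ℝ) :
    gpdf μ σ a = (Real.sqrt (2 * π))⁻¹ * (σ⁻¹ * Real.exp (-((a - μ) ^ 2) / (2 * σ ^ 2))) := by
  unfold gpdf
  rw [Real.sqrt_mul (by positivity : (0:ℝ) ≤ 2 * π), Real.sqrt_sq hσ.le, mul_inv, mul_assoc]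


lemma hasDerivAt_gpdf_sigma (μ a : ℝ) {x : ℝ} (hx : 0 < x) :
    HasDerivAt (fun s => gpdf μ s a) (gpdf μ x a * ((a - μ) ^ 2 / x ^ 3 - 1 / x)) x := by
  set k : ℝ := (a - μ) ^ 2 with hk
  have hinv : HasDerivAt (fun s : ℝ => s⁻¹) (-(x ^ 2)⁻¹) x := hasDerivAt_inv hx.ne'
  have hexpo : HasDerivAt (fun s : ℝ => -k / (2 * s ^ 2)) (k / x ^ 3) x := by
    have h2 : HasDerivAt (fun s : ℝ => 2 * s ^ 2) (2 * (2 * x)) x := by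
      simpa using (hasDerivAt_pow 2 x).const_mul 2
    have h3 : (2 * x ^ 2) ≠ 0 := by positivity
    have h4 := (h2.inv h3).const_mul (-k)
    have heq : (fun s : ℝ => -k * (2 * s ^ 2)⁻¹) = fun s : ℝ => -k / (2 * s ^ 2) := by
      funext s; rw [div_eq_mul_inv]
    simp only [Pi.inv_apply] at h4
    rw [heq] at h4
    refine h4.congr_deriv ?_
    field_simp
  have hexp := hexpo.exp
  have hg : HasDerivAt (fun s : ℝ => (Real.sqrt (2 * π))⁻¹ * (s⁻¹ * Real.exp (-k / (2 * s ^ 2))))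
      ((Real.sqrt (2 * π))⁻¹ * (x⁻¹ * Real.exp (-k / (2 * x ^ 2))) * (k / x ^ 3 - 1 / x)) x := by
    have := (hinv.mul hexp).const_mul ((Real.sqrt (2 * π))⁻¹)
    refine this.congr_deriv ?_
    field_simp
    ring
  have heq : (fun s : ℝ => gpdf μ s a) =ᶠ[nhds x] fun s : ℝ =>
      (Real.sqrt (2 * π))⁻¹ * (s⁻¹ * Real.exp (-k / (2 * s ^ 2))) := by
    filter_upwards [IsOpen.mem_nhds isOpen_Ioi hx] with s hs
    rw [gpdf_eq hs]
  have := hg.congr_of_eventuallyEq heq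
  refine this.congr_deriv ?_
  rw [gpdf_eq hx]


set_option maxHeartbeats 1000000 in
lemma keySigma (r : ℝ → ℝ) (hmeas : Measurable r) (C : ℝ) (hbd : ∀ a, |r a| ≤ C)
    (α : ℝ) (hα : 0 ≤ α) (μt σt : ℝ) (hσ : 0 < σt) (w : ℝ) (hw0 : 0 < w) (hw1 : w ≤ 1) :
    HasDerivAt (fun x => ∫ a, (r a - α * Real.log (w * gpdf μt x a + (1 - w) * gpdf μt σt a)) *
        (w * gpdf μt x a + (1 - w) * gpdf μt σt a))
      (w * ∫ a, (r a - α * Real.log (gpdf μt σt a) - α) *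
        (gpdf μt σt a * ((a - μt) ^ 2 / σt ^ 3 - 1 / σt))) σt := by
  have hC : (0:ℝ) ≤ C := (abs_nonneg _).trans (hbd 0)
  obtain ⟨s2, hs2def⟩ : ∃ c : ℝ, c = (Real.sqrt (2 * π))⁻¹ := ⟨_, rfl⟩
  have hs2 : 0 < s2 := hs2def ▸ inv_pos.2 (Real.sqrt_pos.2 (by positivity))
  obtain ⟨iv, hivdef⟩ : ∃ c : ℝ, c = (σt ^ 2)⁻¹ := ⟨_, rfl⟩
  have hiv : 0 < iv := hivdef ▸ by positivity
  obtain ⟨cM, hcMdef⟩ : ∃ c : ℝ, c = s2 * (σt / 2)⁻¹ := ⟨_, rfl⟩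
  have hcM : 0 < cM := hcMdef ▸ by positivity
  obtain ⟨cm, hcmdef⟩ : ∃ c : ℝ, c = s2 * (3 * σt / 2)⁻¹ := ⟨_, rfl⟩
  have hcm : 0 < cm := hcmdef ▸ by positivity
  obtain ⟨L, hLdef⟩ : ∃ c : ℝ, c = |Real.log cm| + |Real.log cM| := ⟨_, rfl⟩
  have hL : 0 ≤ L := hLdef ▸ by positivity
  obtain ⟨K, hKdef⟩ : ∃ c : ℝ, c = C + α * L + α * (2 * iv) + α := ⟨_, rfl⟩
  have hK : 0 ≤ K := hKdef ▸ by positivity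
  obtain ⟨G, hGdef⟩ : ∃ c : ℝ, c = ((σt / 2) ^ 3)⁻¹ + (σt / 2)⁻¹ := ⟨_, rfl⟩
  have hG : 0 < G := hGdef ▸ by positivity
  obtain ⟨M, hMdef⟩ : ∃ c : ℝ, c = K * (cM * G) := ⟨_, rfl⟩
  obtain ⟨p, hpdef⟩ : ∃ p : ℝ → ℝ → ℝ,
      p = fun x a => w * gpdf μt x a + (1 - w) * gpdf μt σt a := ⟨_, rfl⟩
  obtain ⟨F', hF'def⟩ : ∃ F' : ℝ → ℝ → ℝ,
      F' = fun x a => (r a - α * Real.log (p x a) - α) *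
        (w * (gpdf μt x a * ((a - μt) ^ 2 / x ^ 3 - 1 / x))) := ⟨_, rfl⟩
  have hpval : ∀ x a, p x a = w * gpdf μt x a + (1 - w) * gpdf μt σt a := by
    intro x a; rw [hpdef]
  have hF'val : ∀ x a, F' x a = (r a - α * Real.log (p x a) - α) *
      (w * (gpdf μt x a * ((a - μt) ^ 2 / x ^ 3 - 1 / x))) := by
    intro x a; rw [hF'def]
  -- ball facts
  have hball : ∀ x ∈ Metric.ball σt (σt / 2), σt / 2 < x ∧ x < 3 * σt / 2 := by
    intro x hx
    rw [Metric.mem_ball, Real.dist_eq] at hx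
    obtain ⟨h1, h2⟩ := abs_lt.1 hx
    constructor <;> linarith
  have hxpos : ∀ x ∈ Metric.ball σt (σt / 2), 0 < x := fun x hx => by
    have := (hball x hx).1; linarith
  have hppos : ∀ a, ∀ x ∈ Metric.ball σt (σt / 2), 0 < p x a := fun a x hx => by
    have h1 : 0 < w * gpdf μt x a := mul_pos hw0 (gpdf_pos (hxpos x hx) _ _)
    have h2 : 0 ≤ (1 - w) * gpdf μt σt a :=
      mul_nonneg (by linarith) (gpdf_pos hσ _ _).le
    rw [hpval]; linarith
  have hpm : ∀ x, Measurable (p x) := fun x => by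
    rw [hpdef]
    exact ((continuous_gpdf μt x).measurable.const_mul w).add
      ((continuous_gpdf μt σt).measurable.const_mul (1 - w))
  have hpid : ∀ a, p σt a = gpdf μt σt a := fun a => by rw [hpval]; ring
  -- upper bound for the gaussians on the ball
  have hgle : ∀ a, ∀ x ∈ Metric.ball σt (σt / 2),
      gpdf μt x a ≤ cM * Real.exp (-(iv * 2 / 9 * (a - μt) ^ 2)) := by
    intro a x hx
    obtain ⟨hx1, hx2⟩ := hball x hx
    have hx0 : 0 < x := hxpos x hx
    rw [gpdf_eq hx0, ← hs2def, hcMdef, mul_assoc]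
    apply mul_le_mul_of_nonneg_left _ hs2.le
    apply mul_le_mul
    · exact inv_anti₀ (by positivity) hx1.le
    · apply Real.exp_le_exp.2
      have hexpand : (-(iv * 2 / 9 * (a - μt) ^ 2)) - (-((a - μt) ^ 2) / (2 * x ^ 2))
          = (a - μt) ^ 2 * ((9 * σt ^ 2 - 4 * x ^ 2) / (18 * σt ^ 2 * x ^ 2)) := by
        rw [hivdef]; field_simp; ring
      have hnum : 0 ≤ 9 * σt ^ 2 - 4 * x ^ 2 := by nlinarith
      have hle : 0 ≤ (-(iv * 2 / 9 * (a - μt) ^ 2)) - (-((a - μt) ^ 2) / (2 * x ^ 2)) := by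
        rw [hexpand]
        apply mul_nonneg (sq_nonneg _) (div_nonneg hnum (by positivity))
      linarith
    · positivity
    · positivity
  have hgle' : ∀ a, gpdf μt σt a ≤ cM := by
    intro a
    rw [gpdf_eq hσ, ← hs2def, hcMdef]
    apply mul_le_mul_of_nonneg_left _ hs2.le
    calc σt⁻¹ * Real.exp (-((a - μt) ^ 2) / (2 * σt ^ 2)) ≤ σt⁻¹ * 1 := by
          apply mul_le_mul_of_nonneg_left _ (by positivity)
          rw [Real.exp_le_one_iff]
          have : (0:ℝ) ≤ (a - μt) ^ 2 / (2 * σt ^ 2) := by positivity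
          linarith [neg_div ((2:ℝ) * σt ^ 2) ((a - μt) ^ 2)]
      _ = σt⁻¹ := mul_one _
      _ ≤ (σt / 2)⁻¹ := inv_anti₀ (by positivity) (by linarith)
  have hple : ∀ a, ∀ x ∈ Metric.ball σt (σt / 2), p x a ≤ cM := by
    intro a x hx
    have h1 : gpdf μt x a ≤ cM := by
      have := hgle a x hx
      have h2 : Real.exp (-(iv * 2 / 9 * (a - μt) ^ 2)) ≤ 1 := by
        rw [Real.exp_le_one_iff]
        have : (0:ℝ) ≤ iv * 2 / 9 * (a - μt) ^ 2 := by positivity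
        linarith
      nlinarith
    have h2 := hgle' a
    have h3 : 0 < gpdf μt x a := gpdf_pos (hxpos x hx) _ _
    have h4 : 0 < gpdf μt σt a := gpdf_pos hσ _ _
    rw [hpval]
    nlinarith [mul_le_mul_of_nonneg_left h1 hw0.le,
      mul_le_mul_of_nonneg_left h2 (by linarith : (0:ℝ) ≤ 1 - w)]
  -- lower bound on the ball
  have hplow : ∀ a, ∀ x ∈ Metric.ball σt (σt / 2),
      cm * Real.exp (-(2 * iv * (a - μt) ^ 2)) ≤ p x a := by
    intro a x hx
    obtain ⟨hx1, hx2⟩ := hball x hx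
    have hx0 : 0 < x := hxpos x hx
    have hg1 : cm * Real.exp (-(2 * iv * (a - μt) ^ 2)) ≤ gpdf μt x a := by
      rw [gpdf_eq hx0, ← hs2def, hcmdef, mul_assoc]
      apply mul_le_mul_of_nonneg_left _ hs2.le
      apply mul_le_mul
      · exact inv_anti₀ (by positivity) hx2.le
      · apply Real.exp_le_exp.2
        have hexpand : (-((a - μt) ^ 2) / (2 * x ^ 2)) - (-(2 * iv * (a - μt) ^ 2))
            = (a - μt) ^ 2 * ((4 * x ^ 2 - σt ^ 2) / (2 * σt ^ 2 * x ^ 2)) := by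
          rw [hivdef]; field_simp; ring
        have hnum : 0 ≤ 4 * x ^ 2 - σt ^ 2 := by nlinarith
        have hle : 0 ≤ (-((a - μt) ^ 2) / (2 * x ^ 2)) - (-(2 * iv * (a - μt) ^ 2)) := by
          rw [hexpand]
          apply mul_nonneg (sq_nonneg _) (div_nonneg hnum (by positivity))
        linarith
      · positivity
      · positivity
    have hg2 : cm * Real.exp (-(2 * iv * (a - μt) ^ 2)) ≤ gpdf μt σt a := by
      rw [gpdf_eq hσ, ← hs2def, hcmdef, mul_assoc]
      apply mul_le_mul_of_nonneg_left _ hs2.le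
      apply mul_le_mul
      · exact inv_anti₀ (by positivity) (by linarith)
      · apply Real.exp_le_exp.2
        have hexpand : (-((a - μt) ^ 2) / (2 * σt ^ 2)) - (-(2 * iv * (a - μt) ^ 2))
            = (a - μt) ^ 2 * (3 / (2 * σt ^ 2)) := by
          rw [hivdef]; field_simp; ring
        have hle : 0 ≤ (-((a - μt) ^ 2) / (2 * σt ^ 2)) - (-(2 * iv * (a - μt) ^ 2)) := by
          rw [hexpand]
          positivity
        linarith
      · positivity
      · positivity
    rw [hpval]
    nlinarith [mul_le_mul_of_nonneg_left hg1 hw0.le,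
      mul_le_mul_of_nonneg_left hg2 (by linarith : (0:ℝ) ≤ 1 - w)]
  -- |log p| bound on the ball
  have hlogp : ∀ a, ∀ x ∈ Metric.ball σt (σt / 2),
      |Real.log (p x a)| ≤ L + 2 * iv * (a - μt) ^ 2 := by
    intro a x hx
    have h1 : Real.log (p x a) ≤ Real.log cM :=
      Real.log_le_log (hppos a x hx) (hple a x hx)
    have h2 : Real.log cm + -(2 * iv * (a - μt) ^ 2) ≤ Real.log (p x a) := by
      have h3 := Real.log_le_log
        (by positivity : 0 < cm * Real.exp (-(2 * iv * (a - μt) ^ 2))) (hplow a x hx)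
      rwa [Real.log_mul hcm.ne' (Real.exp_ne_zero _), Real.log_exp] at h3
    have h3 : 0 ≤ 2 * iv * (a - μt) ^ 2 := by positivity
    have h4 : Real.log cM ≤ L := hLdef ▸ by
      have := le_abs_self (Real.log cM); have := abs_nonneg (Real.log cm); linarith
    have h5 : -L ≤ Real.log cm := hLdef ▸ by
      have := neg_abs_le (Real.log cm); have := abs_nonneg (Real.log cM); linarith
    rw [abs_le]
    constructor <;> linarith
  -- pointwise derivative on the ball
  have hdiff : ∀ a, ∀ x ∈ Metric.ball σt (σt / 2),
      HasDerivAt (fun y => (r a - α * Real.log (p y a)) * p y a) (F' x a) x := by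
    intro a x hx
    have hp : HasDerivAt (fun y => p y a)
        (w * (gpdf μt x a * ((a - μt) ^ 2 / x ^ 3 - 1 / x))) x := by
      rw [hpdef]
      exact ((hasDerivAt_gpdf_sigma μt a (hxpos x hx)).const_mul w).add_const
        ((1 - w) * gpdf μt σt a)
    rw [hF'val]
    exact hasDerivAt_obj hp (hppos a x hx)
  -- bound for F'
  have hbound : ∀ a, ∀ x ∈ Metric.ball σt (σt / 2),
      ‖F' x a‖ ≤ M * ((1 + (a - μt) ^ 2) ^ 2 * Real.exp (-(iv * 2 / 9 * (a - μt) ^ 2))) := by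
    intro a x hx
    obtain ⟨hx1, hx2⟩ := hball x hx
    have hx0 : 0 < x := hxpos x hx
    have hfpos : 0 < gpdf μt x a := gpdf_pos hx0 _ _
    have hA : |r a - α * Real.log (p x a) - α| ≤ K * (1 + (a - μt) ^ 2) := by
      have h1 : |r a - α * Real.log (p x a) - α| ≤ C + α * |Real.log (p x a)| + α := by
        have h2 := abs_sub (r a - α * Real.log (p x a)) α
        have h3 := abs_sub (r a) (α * Real.log (p x a))
        have h4 : |α * Real.log (p x a)| = α * |Real.log (p x a)| := by
          rw [abs_mul, abs_of_nonneg hα]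
        have h5 := hbd a
        have h6 : |(α:ℝ)| = α := abs_of_nonneg hα
        rw [h6] at h2
        rw [h4] at h3
        linarith
      have h8 : α * |Real.log (p x a)| ≤ α * (L + 2 * iv * (a - μt) ^ 2) :=
        mul_le_mul_of_nonneg_left (hlogp a x hx) hα
      rw [hKdef]
      nlinarith [mul_nonneg (mul_nonneg hα hiv.le) (sq_nonneg (a - μt)),
        mul_nonneg hC (sq_nonneg (a - μt)),
        mul_nonneg (mul_nonneg hα hL) (sq_nonneg (a - μt)),
        mul_nonneg hα (sq_nonneg (a - μt))]
    have hB : w * (gpdf μt x a * |(a - μt) ^ 2 / x ^ 3 - 1 / x|)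
        ≤ (cM * G) * ((1 + (a - μt) ^ 2) * Real.exp (-(iv * 2 / 9 * (a - μt) ^ 2))) := by
      have hd : |(a - μt) ^ 2 / x ^ 3 - 1 / x| ≤ G * (1 + (a - μt) ^ 2) := by
        have hd1 : |(a - μt) ^ 2 / x ^ 3 - 1 / x| ≤ (a - μt) ^ 2 / x ^ 3 + 1 / x := by
          have := abs_sub ((a - μt) ^ 2 / x ^ 3) (1 / x)
          rw [abs_of_nonneg (show (0:ℝ) ≤ (a - μt) ^ 2 / x ^ 3 by positivity),
            abs_of_nonneg (show (0:ℝ) ≤ 1 / x by positivity)] at this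
          linarith
        have hd2 : (a - μt) ^ 2 / x ^ 3 ≤ (a - μt) ^ 2 * ((σt / 2) ^ 3)⁻¹ := by
          rw [div_eq_mul_inv]
          apply mul_le_mul_of_nonneg_left _ (sq_nonneg _)
          apply inv_anti₀ (by positivity)
          exact pow_le_pow_left₀ (by positivity) hx1.le 3
        have hd3 : 1 / x ≤ (σt / 2)⁻¹ := by
          rw [one_div]
          exact inv_anti₀ (by positivity) hx1.le
        rw [hGdef]
        have hq1 : (a - μt) ^ 2 * ((σt / 2) ^ 3)⁻¹ ≤ ((σt / 2) ^ 3)⁻¹ * (1 + (a - μt) ^ 2) := by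
          nlinarith [inv_pos.2 (by positivity : (0:ℝ) < (σt / 2) ^ 3)]
        have hq2 : (σt / 2)⁻¹ ≤ (σt / 2)⁻¹ * (1 + (a - μt) ^ 2) := by
          nlinarith [inv_pos.2 (by positivity : (0:ℝ) < σt / 2), sq_nonneg (a - μt)]
        nlinarith
      calc w * (gpdf μt x a * |(a - μt) ^ 2 / x ^ 3 - 1 / x|)
          ≤ 1 * ((cM * Real.exp (-(iv * 2 / 9 * (a - μt) ^ 2))) * (G * (1 + (a - μt) ^ 2))) := by
            apply mul_le_mul hw1 _ (by positivity) zero_le_one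
            exact mul_le_mul (hgle a x hx) hd (abs_nonneg _) (by positivity)
        _ = (cM * G) * ((1 + (a - μt) ^ 2) * Real.exp (-(iv * 2 / 9 * (a - μt) ^ 2))) := by ring
    have hFeq : ‖F' x a‖ = |r a - α * Real.log (p x a) - α|
        * (w * (gpdf μt x a * |(a - μt) ^ 2 / x ^ 3 - 1 / x|)) := by
      rw [hF'val, Real.norm_eq_abs, abs_mul, abs_mul, abs_mul, abs_of_pos hw0, abs_of_pos hfpos]
    rw [hFeq, hMdef]
    calc |r a - α * Real.log (p x a) - α| * (w * (gpdf μt x a * |(a - μt) ^ 2 / x ^ 3 - 1 / x|))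
        ≤ (K * (1 + (a - μt) ^ 2)) *
          ((cM * G) * ((1 + (a - μt) ^ 2) * Real.exp (-(iv * 2 / 9 * (a - μt) ^ 2)))) := by
          apply mul_le_mul hA hB _ (by positivity)
          positivity
      _ = (K * (cM * G)) *
          ((1 + (a - μt) ^ 2) ^ 2 * Real.exp (-(iv * 2 / 9 * (a - μt) ^ 2))) := by ring
  -- measurability
  have hFmeas : ∀ x : ℝ,
      AEStronglyMeasurable (fun a => (r a - α * Real.log (p x a)) * p x a) volume :=
    fun x => ((hmeas.sub (((hpm x).log).const_mul α)).mul (hpm x)).aestronglyMeasurable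
  have hF'meas : AEStronglyMeasurable (F' σt) volume := by
    rw [hF'def]
    apply Measurable.aestronglyMeasurable
    apply Measurable.mul
    · exact (hmeas.sub (((hpm σt).log).const_mul α)).sub measurable_const
    · apply Measurable.const_mul
      exact (continuous_gpdf μt σt).measurable.mul (by fun_prop)
  -- integrability of F σt
  have hFint : Integrable (fun a => (r a - α * Real.log (p σt a)) * p σt a) := by
    obtain ⟨c0, hc0def⟩ : ∃ c : ℝ, c = (Real.sqrt (2 * π * σt ^ 2))⁻¹ := ⟨_, rfl⟩
    have hc0 : 0 < c0 := hc0def ▸ inv_pos.2 (sqrt2pi_pos hσ)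
    obtain ⟨L0, hL0def⟩ : ∃ c : ℝ, c = |Real.log c0| := ⟨_, rfl⟩
    have hL0 : 0 ≤ L0 := hL0def ▸ abs_nonneg _
    obtain ⟨K0, hK0def⟩ : ∃ c : ℝ, c = C + α * L0 + α * iv + α := ⟨_, rfl⟩
    have hK0 : 0 ≤ K0 := hK0def ▸ by positivity
    apply (integrable_master (K0 * c0) (iv / 2) μt (by positivity)).mono' (hFmeas σt)
    refine Filter.Eventually.of_forall fun a => ?_
    have hgl : gpdf μt σt a = c0 * Real.exp (-(iv / 2 * (a - μt) ^ 2)) := by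
      unfold gpdf
      rw [← hc0def]
      congr 1
      rw [hivdef]
      field_simp
    have hlg : |Real.log (gpdf μt σt a)| ≤ L0 + iv / 2 * (a - μt) ^ 2 := by
      rw [hgl, Real.log_mul hc0.ne' (Real.exp_ne_zero _), Real.log_exp]
      calc |Real.log c0 + -(iv / 2 * (a - μt) ^ 2)|
          ≤ |Real.log c0| + |(-(iv / 2 * (a - μt) ^ 2))| := abs_add_le _ _
        _ = L0 + iv / 2 * (a - μt) ^ 2 := by
            rw [← hL0def, abs_neg, abs_of_nonneg (by positivity)]
    have hgpos : 0 < gpdf μt σt a := gpdf_pos hσ _ _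
    rw [Real.norm_eq_abs, abs_mul, hpid a, abs_of_pos hgpos]
    have hA : |r a - α * Real.log (gpdf μt σt a)| ≤ K0 * (1 + (a - μt) ^ 2) := by
      have h3 := abs_sub (r a) (α * Real.log (gpdf μt σt a))
      have h4 : |α * Real.log (gpdf μt σt a)| = α * |Real.log (gpdf μt σt a)| := by
        rw [abs_mul, abs_of_nonneg hα]
      have h5 := hbd a
      have h8 : α * |Real.log (gpdf μt σt a)| ≤ α * (L0 + iv / 2 * (a - μt) ^ 2) :=
        mul_le_mul_of_nonneg_left hlg hα
      rw [h4] at h3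
      rw [hK0def]
      nlinarith [mul_nonneg (mul_nonneg hα hiv.le) (sq_nonneg (a - μt)),
        mul_nonneg hC (sq_nonneg (a - μt)),
        mul_nonneg (mul_nonneg hα hL0) (sq_nonneg (a - μt)),
        mul_nonneg hα (sq_nonneg (a - μt))]
    calc |r a - α * Real.log (gpdf μt σt a)| * gpdf μt σt a
        ≤ (K0 * (1 + (a - μt) ^ 2)) * (c0 * Real.exp (-(iv / 2 * (a - μt) ^ 2))) :=
          mul_le_mul hA (le_of_eq hgl) hgpos.le (by positivity)
      _ ≤ (K0 * c0) * ((1 + (a - μt) ^ 2) ^ 2 * Real.exp (-(iv / 2 * (a - μt) ^ 2))) := by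
          have h9 : (1 + (a - μt) ^ 2) ≤ (1 + (a - μt) ^ 2) ^ 2 := by
            nlinarith [sq_nonneg (a - μt), sq_nonneg ((a - μt) ^ 2)]
          have h10 : 0 ≤ K0 * c0 * Real.exp (-(iv / 2 * (a - μt) ^ 2)) := by positivity
          nlinarith [mul_le_mul_of_nonneg_right h9 h10]
  -- dominated derivative theorem
  have main := hasDerivAt_integral_of_dominated_loc_of_deriv_le (𝕜 := ℝ) (μ := volume)
    (F := fun x a => (r a - α * Real.log (p x a)) * p x a) (F' := F')
    (x₀ := σt)
    (bound := fun a => M * ((1 + (a - μt) ^ 2) ^ 2 * Real.exp (-(iv * 2 / 9 * (a - μt) ^ 2))))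
    (Metric.ball_mem_nhds σt (by positivity : 0 < σt / 2)) (Filter.Eventually.of_forall hFmeas) hFint hF'meas
    (Filter.Eventually.of_forall fun a x hx => hbound a x hx)
    (integrable_master M (iv * 2 / 9) μt (by positivity))
    (Filter.Eventually.of_forall fun a x hx => hdiff a x hx)
  obtain ⟨-, hder⟩ := main
  have hval : (∫ a, F' σt a) =
      w * ∫ a, (r a - α * Real.log (gpdf μt σt a) - α) *
        (gpdf μt σt a * ((a - μt) ^ 2 / σt ^ 3 - 1 / σt)) := by
    rw [← integral_const_mul]
    apply integral_congr_ae
    refine Filter.EventuallyEq.of_eq (funext fun a => ?_)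
    rw [hF'val, hpid a]
    ring
  rw [hval] at hder
  have hfun : (fun x => ∫ a, (r a - α * Real.log (p x a)) * p x a)
      = fun x => ∫ a, (r a - α * Real.log (w * gpdf μt x a + (1 - w) * gpdf μt σt a)) *
          (w * gpdf μt x a + (1 - w) * gpdf μt σt a) := by
    rw [hpdef]
  rw [hfun] at hder
  exact hder

lemma sum_exp_pos {N : ℕ} (hN : 0 < N) (η : Fin N → ℝ) : 0 < ∑ j, Real.exp (η j) := by
  have : Nonempty (Fin N) := Fin.pos_iff_nonempty.1 hN
  exact Finset.sum_pos (fun j _ => Real.exp_pos _) Finset.univ_nonempty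

lemma softmax_pos {N : ℕ} (hN : 0 < N) (η : Fin N → ℝ) (k : Fin N) : 0 < softmaxW η k :=
  div_pos (Real.exp_pos _) (sum_exp_pos hN η)

lemma softmax_le_one {N : ℕ} (hN : 0 < N) (η : Fin N → ℝ) (k : Fin N) : softmaxW η k ≤ 1 := by
  rw [softmaxW, div_le_one (sum_exp_pos hN η)]
  exact Finset.single_le_sum (fun j _ => (Real.exp_pos (η j)).le) (Finset.mem_univ k)

lemma softmax_sum {N : ℕ} (hN : 0 < N) (η : Fin N → ℝ) : ∑ k, softmaxW η k = 1 := by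
  unfold softmaxW
  rw [← Finset.sum_div]
  exact div_self (sum_exp_pos hN η).ne'

lemma mix_const {N : ℕ} (hN : 0 < N) (μt σt : ℝ) (η : Fin N → ℝ) (a : ℝ) :
    mixDensity (fun _ : Fin N => μt) (fun _ => σt) η a = gpdf μt σt a := by
  unfold mixDensity
  rw [← Finset.sum_mul, softmax_sum hN, one_mul]

lemma mix_update_mu {N : ℕ} (hN : 0 < N) (μt σt x : ℝ) (η : Fin N → ℝ) (k : Fin N) (a : ℝ) :
    mixDensity (Function.update (fun _ : Fin N => μt) k x) (fun _ => σt) η a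
      = softmaxW η k * gpdf x σt a + (1 - softmaxW η k) * gpdf μt σt a := by
  unfold mixDensity
  rw [← Finset.sum_erase_add _ _ (Finset.mem_univ k)]
  have h1 : ∀ j ∈ Finset.univ.erase k,
      softmaxW η j * gpdf ((Function.update (fun _ : Fin N => μt) k x) j) ((fun _ : Fin N => σt) j) a
        = softmaxW η j * gpdf μt σt a := by
    intro j hj
    rw [Function.update_of_ne (Finset.ne_of_mem_erase hj)]
  rw [Finset.sum_congr rfl h1, ← Finset.sum_mul, Finset.sum_erase_eq_sub (Finset.mem_univ k),
    softmax_sum hN, Function.update_self]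
  ring

lemma mix_update_sigma {N : ℕ} (hN : 0 < N) (μt σt x : ℝ) (η : Fin N → ℝ) (k : Fin N) (a : ℝ) :
    mixDensity (fun _ : Fin N => μt) (Function.update (fun _ : Fin N => σt) k x) η a
      = softmaxW η k * gpdf μt x a + (1 - softmaxW η k) * gpdf μt σt a := by
  unfold mixDensity
  rw [← Finset.sum_erase_add _ _ (Finset.mem_univ k)]
  have h1 : ∀ j ∈ Finset.univ.erase k,
      softmaxW η j * gpdf ((fun _ : Fin N => μt) j) ((Function.update (fun _ : Fin N => σt) k x) j) a
        = softmaxW η j * gpdf μt σt a := by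
    intro j hj
    rw [Function.update_of_ne (Finset.ne_of_mem_erase hj)]
  rw [Finset.sum_congr rfl h1, ← Finset.sum_mul, Finset.sum_erase_eq_sub (Finset.mem_univ k),
    softmax_sum hN, Function.update_self]
  ring

/-- every stationary point of the Gaussian objective yields, by
duplicating it in all components (for any softmax-weight parameters), a
stationary point of the `N`-component mixture objective with the same objective
value. -/
theorem stmt3 (r : ℝ → ℝ) (hmeas : Measurable r) (C : ℝ) (hbd : ∀ a, |r a| ≤ C)
    (α : ℝ) (hα : 0 ≤ α) (μt σt : ℝ) (hstat : IsStatB r α μt σt)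
    (N : ℕ) (hN : 1 ≤ N) (η : Fin N → ℝ) :
    IsStatM r α (fun _ : Fin N => μt) (fun _ => σt) η ∧
    Jm r α (fun _ : Fin N => μt) (fun _ => σt) η = Jb r α μt σt := by
  obtain ⟨hσ, ⟨hdμ, h0μ⟩, hdσ, h0σ⟩ := hstat
  have hNpos : 0 < N := hN
  -- the μ-gradient integral vanishes
  have hbμ := keyMu r hmeas C hbd α hα μt σt hσ 1 one_pos le_rfl
  have hJbμ : (fun x => ∫ a, (r a - α * Real.log (1 * gpdf x σt a + (1 - 1) * gpdf μt σt a)) *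
      (1 * gpdf x σt a + (1 - 1) * gpdf μt σt a)) = fun x => Jb r α x σt := by
    funext x
    unfold Jb
    simp only [one_mul, sub_self, zero_mul, add_zero]
  rw [hJbμ] at hbμ
  have hDμ : (∫ a, (r a - α * Real.log (gpdf μt σt a) - α) *
      (gpdf μt σt a * ((a - μt) / σt ^ 2))) = 0 := by
    have h := hbμ.deriv
    rw [h0μ] at h
    linarith
  -- the σ-gradient integral vanishes
  have hbσ := keySigma r hmeas C hbd α hα μt σt hσ 1 one_pos le_rfl
  have hJbσ : (fun x => ∫ a, (r a - α * Real.log (1 * gpdf μt x a + (1 - 1) * gpdf μt σt a)) *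
      (1 * gpdf μt x a + (1 - 1) * gpdf μt σt a)) = fun x => Jb r α μt x := by
    funext x
    unfold Jb
    simp only [one_mul, sub_self, zero_mul, add_zero]
  rw [hJbσ] at hbσ
  have hDσ : (∫ a, (r a - α * Real.log (gpdf μt σt a) - α) *
      (gpdf μt σt a * ((a - μt) ^ 2 / σt ^ 3 - 1 / σt))) = 0 := by
    have h := hbσ.deriv
    rw [h0σ] at h
    linarith
  -- value equality
  have hval : Jm r α (fun _ : Fin N => μt) (fun _ => σt) η = Jb r α μt σt := by
    unfold Jm Jb
    simp only [mix_const hNpos]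
  refine ⟨⟨fun k => hσ, fun k => ?_⟩, hval⟩
  have hw0 := softmax_pos hNpos η k
  have hw1 := softmax_le_one hNpos η k
  -- μ_k derivative
  have hmμ := keyMu r hmeas C hbd α hα μt σt hσ (softmaxW η k) hw0 hw1
  rw [hDμ, mul_zero] at hmμ
  have hfunμ : (fun x => Jm r α (Function.update (fun _ : Fin N => μt) k x) (fun _ => σt) η)
      = fun x => ∫ a, (r a - α * Real.log (softmaxW η k * gpdf x σt a
          + (1 - softmaxW η k) * gpdf μt σt a)) *
        (softmaxW η k * gpdf x σt a + (1 - softmaxW η k) * gpdf μt σt a) := by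
    funext x
    unfold Jm
    simp only [mix_update_mu hNpos]
  rw [← hfunμ] at hmμ
  -- σ_k derivative
  have hmσ := keySigma r hmeas C hbd α hα μt σt hσ (softmaxW η k) hw0 hw1
  rw [hDσ, mul_zero] at hmσ
  have hfunσ : (fun x => Jm r α (fun _ : Fin N => μt) (Function.update (fun _ : Fin N => σt) k x) η)
      = fun x => ∫ a, (r a - α * Real.log (softmaxW η k * gpdf μt x a
          + (1 - softmaxW η k) * gpdf μt σt a)) *
        (softmaxW η k * gpdf μt x a + (1 - softmaxW η k) * gpdf μt σt a) := by
    funext x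
    unfold Jm
    simp only [mix_update_sigma hNpos]
  rw [← hfunσ] at hmσ
  -- η_k derivative: the function is constant
  have hconstη : (fun x => Jm r α (fun _ : Fin N => μt) (fun _ => σt) (Function.update η k x))
      = fun _ => Jb r α μt σt := by
    funext x
    unfold Jm Jb
    simp only [mix_const hNpos]
  exact ⟨⟨hmμ.differentiableAt, hmμ.deriv⟩, ⟨hmσ.differentiableAt, hmσ.deriv⟩,
    ⟨by rw [hconstη]; exact differentiableAt_const _, by rw [hconstη]; simp⟩⟩
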